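/- For n ≥ 5, FQ_n contains no cycle of length 3 and no cycle of length 5. -/

import Mathlib

def Q (n : ℕ) : SimpleGraph (Fin n → ZMod 2) :=
  SimpleGraph.fromRel (fun u v => hammingDist u v = 1)

def FQ (n : ℕ) : SimpleGraph (Fin n → ZMod 2) :=
  SimpleGraph.fromRel (fun u v => hammingDist u v = 1 ∨ hammingDist u v = n)


lemma z2sub : ∀ a b : ZMod 2, a ≠ b → b - a = 1 := by decide

lemma z2add : ∀ a b : ZMod 2, a ≠ b → b = a + 1 := by decide

lemma sum_sub_eq (n : ℕ) (u x : Fin n → ZMod 2) :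
    ∑ i, (x i - u i) = (hammingDist u x : ZMod 2) := by
  rw [hammingDist, Finset.card_filter, Nat.cast_sum]
  refine Finset.sum_congr rfl fun i _ => ?_
  by_cases h : u i = x i
  · simp [h]
  · rw [if_pos h, z2sub _ _ h, Nat.cast_one]

lemma dist_add_const (n : ℕ) (u x : Fin n → ZMod 2) (c : ZMod 2) :
    hammingDist (fun i => u i + c) (fun i => x i + c) = hammingDist u x := by
  unfold hammingDist
  congr 1
  ext i
  simp

lemma dist_n_eq (n : ℕ) (u x : Fin n → ZMod 2) (h : hammingDist u x = n) :
    x = fun i => u i + 1 := by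
  have hfil : ({i | u i ≠ x i} : Finset (Fin n)) = Finset.univ := by
    apply Finset.eq_univ_of_card
    simpa [hammingDist] using h
  funext i
  have hi : u i ≠ x i := by
    have := Finset.filter_eq_self.mp hfil i (Finset.mem_univ i)
    simpa using this
  exact z2add _ _ hi

lemma key (n : ℕ) {u v : Fin n → ZMod 2} (w : (FQ n).Walk u v) :
    ∃ a b : ℕ, a + b = w.length ∧
      hammingDist v (fun i => u i + (a : ZMod 2)) ≤ b ∧
      (∑ i, (v i - u i)) = ((a * n + b : ℕ) : ZMod 2) := by
  induction w with
  | nil => exact ⟨0, 0, by simp, by simp [hammingDist_comm], by simp⟩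
  | @cons u x v h w ih =>
    obtain ⟨a, b, hab, hd, hs⟩ := ih
    have hadj : hammingDist u x = 1 ∨ hammingDist u x = n := by
      rcases h with ⟨-, h | h⟩
      · exact h
      · rcases h with h | h
        · exact Or.inl (by rwa [hammingDist_comm])
        · exact Or.inr (by rwa [hammingDist_comm])
    have hsum : ∑ i, (v i - u i) = (∑ i, (v i - x i)) + ∑ i, (x i - u i) := by
      rw [← Finset.sum_add_distrib]; congr 1; funext i; ring
    rcases hadj with h1 | hn
    · refine ⟨a, b + 1, by rw [SimpleGraph.Walk.length_cons]; omega, ?_, ?_⟩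
      · calc hammingDist v (fun i => u i + (a : ZMod 2))
            ≤ hammingDist v (fun i => x i + (a : ZMod 2)) +
              hammingDist (fun i => x i + (a : ZMod 2)) (fun i => u i + (a : ZMod 2)) :=
              hammingDist_triangle _ _ _
          _ ≤ b + 1 := by
              rw [dist_add_const, hammingDist_comm x u, h1]
              exact Nat.add_le_add_right hd 1
      · rw [hsum, hs, sum_sub_eq, h1]
        push_cast; ring
    · have hx : x = fun i => u i + 1 := dist_n_eq n u x hn
      refine ⟨a + 1, b, by rw [SimpleGraph.Walk.length_cons]; omega, ?_, ?_⟩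
      · have : (fun i => u i + ((a + 1 : ℕ) : ZMod 2)) = fun i => x i + (a : ZMod 2) := by
          funext i; rw [hx]; push_cast; ring
        rw [this]; exact hd
      · rw [hsum, hs, sum_sub_eq, hn]
        push_cast; ring

lemma no_odd_short (n : ℕ) (hn : 5 ≤ n) (u : Fin n → ZMod 2) (w : (FQ n).Walk u u)
    (L : ℕ) (hL : L = 3 ∨ L = 5) (hlen : w.length = L) : False := by
  obtain ⟨a, b, hab, hd, hs⟩ := key n w
  rw [hlen] at hab
  simp only [sub_self, Finset.sum_const, smul_zero] at hs
  rcases Nat.even_or_odd a with he | ho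
  · -- a even ⇒ b even ⇒ L even, contradiction
    obtain ⟨k, hk⟩ := he
    have h2an : (2 : ℕ) ∣ a * n := ⟨k * n, by rw [hk]; ring⟩
    have : ((a * n + b : ℕ) : ZMod 2) = 0 := hs.symm
    have hdvd : (2 : ℕ) ∣ a * n + b := by
      rwa [ZMod.natCast_eq_zero_iff] at this
    have hb : (2 : ℕ) ∣ b := (Nat.dvd_add_right h2an).mp hdvd
    omega
  · -- a odd ⇒ dist u (u+1) = n ≤ b, but b ≤ 4 < n
    have ha2 : a % 2 = 1 := Nat.odd_iff.mp ho
    have hcast : (a : ZMod 2) = 1 := by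
      rw [← ZMod.natCast_mod, ha2, Nat.cast_one]
    rw [hcast] at hd
    have hdist : hammingDist u (fun i => u i + 1) = n := by
      unfold hammingDist
      have : ({i | u i ≠ u i + 1} : Finset (Fin n)) = Finset.univ := by
        apply Finset.eq_univ_of_forall
        intro i
        simp only [Finset.mem_filter, Finset.mem_univ, true_and]
        have hne : ∀ c : ZMod 2, c ≠ c + 1 := by decide
        exact hne (u i)
      rw [this, Finset.card_univ, Fintype.card_fin]
    have : n ≤ b := hdist ▸ hd
    have ha1 : 1 ≤ a := by omega
    omega

theorem folded_hypercube_no_C3_C5 (n : ℕ) (hn : 5 ≤ n) :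
    ∀ (u : Fin n → ZMod 2) (w : (FQ n).Walk u u),
      w.IsCycle → w.length ≠ 3 ∧ w.length ≠ 5 := by
  intro u w _
  constructor
  · intro h3; exact no_odd_short n hn u w 3 (Or.inl rfl) h3
  · intro h5; exact no_odd_short n hn u w 5 (Or.inr rfl) h5
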